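/- (Theorem 8(b)) If R̄₀ > 1, then the reduced system (21) is uniformly persistent: there exists ε > 0 such that every solution with Y(0) ∈ ℝ⁴₊, S(0)+E(0)+I(0)+R(0) > 0 and E(0) + I(0) > 0 satisfies liminf_{t→∞} (E(t) + I(t)) > ε. -/

import Mathlib

set_option maxHeartbeats 1600000

/-- positivity of denominators -/
lemma aux_den_pos (a b c d x y z w : ℝ) (ha : 0 < a) (hb : 0 < b) (hc : 0 < c)
    (hd : 0 < d) (hx : 0 ≤ x) (hy : 0 ≤ y) (hz : 0 ≤ z) (hw : 0 ≤ w)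
    (hsum : 0 < x + y + z + w) : 0 < a * x + b * y + c * z + d * w := by
  have h1 : 0 < x ∨ 0 < y ∨ 0 < z ∨ 0 < w := by
    by_contra h; push_neg at h; linarith [h.1, h.2.1, h.2.2.1, h.2.2.2]
  have hax : 0 ≤ a * x := mul_nonneg ha.le hx
  have hby : 0 ≤ b * y := mul_nonneg hb.le hy
  have hcz : 0 ≤ c * z := mul_nonneg hc.le hz
  have hdw : 0 ≤ d * w := mul_nonneg hd.le hw
  rcases h1 with h | h | h | h
  · nlinarith [mul_pos ha h]
  · nlinarith [mul_pos hb h]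
  · nlinarith [mul_pos hc h]
  · nlinarith [mul_pos hd h]

/-- per-patch bound : infection term in the S equation is at most σs*ms*S -/
lemma aux_infection_le (σs b mi ms den S I : ℝ) (hσ : 0 ≤ σs) (hb0 : 0 ≤ b)
    (hb1 : b ≤ 1) (hmi : 0 ≤ mi) (hms : 0 ≤ ms) (hden : 0 < den) (hS : 0 ≤ S)
    (hI : 0 ≤ I) (hmiI : mi * I ≤ den) :
    σs * b * mi * ms / den * S * I ≤ σs * ms * S := by
  rw [div_mul_eq_mul_div, div_mul_eq_mul_div, div_le_iff₀ hden]
  have h1 : σs * b * mi * ms * S * I ≤ σs * mi * ms * S * I := by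
    nlinarith [mul_nonneg (mul_nonneg (mul_nonneg hσ hmi) hms) (mul_nonneg hS hI)]
  have h2 : σs * mi * ms * S * I ≤ σs * (ms * S) * den := by
    have := mul_le_mul_of_nonneg_left hmiI (mul_nonneg (mul_nonneg hσ hms) hS)
    nlinarith
  linarith

/-- per-patch column bound for the total-population estimate -/
lemma aux_col_S (σs σe s b mi ms den S I : ℝ) (hσs : 0 ≤ σs) (hσss : σs ≤ s)
    (hσe : 0 ≤ σe) (hσes : σe ≤ s) (hb0 : 0 ≤ b) (hb1 : b ≤ 1) (hmi : 0 ≤ mi)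
    (hms : 0 ≤ ms) (hden : 0 < den) (hS : 0 ≤ S) (hI : 0 ≤ I) (hmiI : mi * I ≤ den) :
    σe * b * mi * ms / den * S * I - σs * b * mi * ms / den * S * I + σs * ms * S
      ≤ s * ms * S := by
  have hu0 : 0 ≤ b * mi * ms / den * S * I := by positivity
  have hums : b * mi * ms / den * S * I ≤ ms * S := by
    rw [div_mul_eq_mul_div, div_mul_eq_mul_div, div_le_iff₀ hden]
    have h1 : b * mi * ms * S * I ≤ mi * ms * S * I := by
      nlinarith [mul_nonneg (mul_nonneg hmi hms) (mul_nonneg hS hI)]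
    have h2 : mi * ms * S * I ≤ ms * S * den := by
      have := mul_le_mul_of_nonneg_left hmiI (mul_nonneg hms hS)
      nlinarith
    linarith
  have he : σe * b * mi * ms / den * S * I = σe * (b * mi * ms / den * S * I) := by
    ring
  have hs' : σs * b * mi * ms / den * S * I = σs * (b * mi * ms / den * S * I) := by
    ring
  rw [he, hs']
  nlinarith [mul_nonneg (sub_nonneg.2 hσes) hu0,
    mul_nonneg (sub_nonneg.2 hσss) (sub_nonneg.2 hums)]

/-- per-patch lower bound for the infection term when E, I, R are small -/
lemma aux_growth (σe b mi ms me mr mlow mhigh Bb hh S E I R : ℝ)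
    (hσe : 0 ≤ σe) (hb0 : 0 ≤ b) (hmi : 0 ≤ mi)
    (hmlow : 0 < mlow) (hmhigh : 0 < mhigh) (hBb : 0 < Bb) (hhh : 0 < hh)
    (hmsl : mlow ≤ ms) (hmeh : me ≤ mhigh) (hmih : mi ≤ mhigh) (hmrh : mr ≤ mhigh)
    (hSB : Bb ≤ S) (hE : 0 ≤ E) (hI : 0 ≤ I) (hR : 0 ≤ R)
    (hden : 0 < ms * S + me * E + mi * I + mr * R)
    (hsmall : me * E + mi * I + mr * R ≤ mhigh * hh) :
    mlow * Bb / (mlow * Bb + mhigh * hh) * (σe * b * mi)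
      ≤ σe * b * mi * ms / (ms * S + me * E + mi * I + mr * R) * S := by
  have hmsS : mlow * Bb ≤ ms * S := by nlinarith
  have hratio : mlow * Bb / (mlow * Bb + mhigh * hh)
      ≤ ms * S / (ms * S + me * E + mi * I + mr * R) := by
    rw [div_le_div_iff₀ (by positivity) hden]
    have h1 : mlow * Bb * (me * E + mi * I + mr * R) ≤ mlow * Bb * (mhigh * hh) :=
      mul_le_mul_of_nonneg_left hsmall (by positivity)
    have h2 : mlow * Bb * (mhigh * hh) ≤ ms * S * (mhigh * hh) :=
      mul_le_mul_of_nonneg_right hmsS (by positivity)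
    nlinarith [h1, h2]
  have heq : σe * b * mi * ms / (ms * S + me * E + mi * I + mr * R) * S
      = σe * b * mi * (ms * S / (ms * S + me * E + mi * I + mr * R)) := by
    ring
  rw [heq]
  calc mlow * Bb / (mlow * Bb + mhigh * hh) * (σe * b * mi)
      = σe * b * mi * (mlow * Bb / (mlow * Bb + mhigh * hh)) := by ring
    _ ≤ σe * b * mi * (ms * S / (ms * S + me * E + mi * I + mr * R)) := by
        apply mul_le_mul_of_nonneg_left hratio (by positivity)

lemma aux_colsum (σa σb s g m : ℝ) (has : σa ≤ s) (hbs : σb ≤ s)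
    (hg0 : 0 ≤ g) (hg1 : g ≤ 1) (hm : 0 ≤ m) :
    σa * (1 - g) * m + σb * g * m ≤ s * m := by
  nlinarith [mul_nonneg (mul_nonneg (sub_nonneg.2 has) (by linarith : (0:ℝ) ≤ 1 - g)) hm,
    mul_nonneg (mul_nonneg (sub_nonneg.2 hbs) hg0) hm]

lemma aux_poly (dEE dII ρ : ℝ) (h1 : 0 ≤ dEE) (h2 : 0 ≤ dII)
    (hρ0 : 0 ≤ ρ) (hρ1 : ρ ≤ 1) :
    (1 - dEE + ρ) * (1 - dII + ρ) ≤ (1 - dEE) * (1 - dII) + 3 * ρ := by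
  nlinarith [mul_nonneg hρ0 h1, mul_nonneg hρ0 h2, mul_nonneg hρ0 (sub_nonneg.2 hρ1)]

lemma aux_kA (mb mhigh hh A C3 : ℝ) (hble : hh * (C3 * mhigh) ≤ mb * (A - C3)) :
    C3 * (mb + mhigh * hh) ≤ mb * A := by nlinarith

lemma aux_coef2 (θ dEI dEE dII ρ x : ℝ) (he : θ * dEI = 1 - dEE + ρ)
    (hpoly : (1 - dEE + ρ) * (1 - dII + ρ) ≤ x) :
    (1 + ρ) * θ * dEI ≤ x + θ * dII * dEI := by
  have h1 : (1 + ρ) * θ * dEI = (1 + ρ) * (1 - dEE + ρ) := by rw [mul_assoc, he]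
  have h2 : θ * dII * dEI = dII * (1 - dEE + ρ) := by
    rw [show θ * dII * dEI = dII * (θ * dEI) by ring, he]
  rw [h1, h2]
  nlinarith [hpoly]


open Filter in
/-- Abstract persistence lemma for the infected compartments. -/
lemma persistence_aux
    (dEE dII dEI dIR dRR bI' θ lam η η₂ Nstar : ℝ) (K : ℕ)
    (hdEE : 0 < dEE) (hdEE1 : dEE < 1) (hdII : 0 < dII) (hdII1 : dII < 1)
    (hdEI : 0 ≤ dEI) (hdIR : 0 ≤ dIR) (hdRR0 : 0 ≤ dRR) (hdRR1 : dRR < 1)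
    (hθ : 0 < θ) (hlam : 1 < lam)
    (hη : 0 < η) (hη₂ : 0 < η₂) (hNs : 0 < Nstar)
    (hcoef1 : lam ≤ dEE + θ * dEI) (hcoef2 : lam * θ ≤ bI' + θ * dII)
    (hK : dRR ^ K * Nstar ≤ η₂ / 2)
    (hcc : dIR * η / (1 - dRR) ≤ η₂ / 2)
    (E I R : ℕ → ℝ)
    (hEnn : ∀ t, 0 ≤ E t) (hInn : ∀ t, 0 ≤ I t) (hRnn : ∀ t, 0 ≤ R t)
    (hEI : ∀ t, 0 < E t + I t)
    (hbound : ∃ T₀, ∀ t, T₀ ≤ t → E t + I t + R t ≤ Nstar)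
    (hEstep : ∀ t, dEE * E t ≤ E (t + 1))
    (hIstep : ∀ t, dEI * E t + dII * I t ≤ I (t + 1))
    (hRstep : ∀ t, R (t + 1) ≤ dIR * I t + dRR * R t)
    (hGrow : ∀ t, 1 ≤ t → E t ≤ η → I t ≤ η → R t ≤ η₂ →
        bI' * I t + dEE * E t ≤ E (t + 1)) :
    min 1 θ * η * min dEE dII ^ (K + 1) * min dEE dII / (2 * max 1 θ)
      < Filter.liminf (fun t => E t + I t) Filter.atTop := by
  obtain ⟨T₀, hT₀⟩ := hbound
  set μ := min dEE dII with hμdef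
  have hμ0 : 0 < μ := lt_min hdEE hdII
  have hμ1 : μ < 1 := lt_of_le_of_lt (min_le_left _ _) hdEE1
  set W : ℕ → ℝ := fun t => E t + θ * I t with hWdef
  set ηb : ℝ := min 1 θ * η with hηb
  set ε' : ℝ := ηb * μ ^ (K + 1) with hε'
  have hmin0 : 0 < min 1 θ := lt_min one_pos hθ
  have hmax0 : (0:ℝ) < max 1 θ := lt_of_lt_of_le one_pos (le_max_left _ _)
  have hηb0 : 0 < ηb := mul_pos hmin0 hη
  have hε'0 : 0 < ε' := mul_pos hηb0 (pow_pos hμ0 _)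
  have hε'ηb : ε' ≤ ηb := by
    have : μ ^ (K + 1) ≤ 1 := pow_le_one₀ hμ0.le hμ1.le
    nlinarith
  -- basic facts about W
  have hWpos : ∀ t, 0 < W t := by
    intro t
    have h1 : min 1 θ * (E t + I t) ≤ W t := by
      have h2 : min 1 θ ≤ 1 := min_le_left _ _
      have h3 : min 1 θ ≤ θ := min_le_right _ _
      have := hEnn t; have := hInn t
      simp only [hWdef]; nlinarith
    exact lt_of_lt_of_le (mul_pos hmin0 (hEI t)) h1
  have hWle : ∀ t, W t ≤ max 1 θ * (E t + I t) := by
    intro t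
    have h2 : (1:ℝ) ≤ max 1 θ := le_max_left _ _
    have h3 : θ ≤ max 1 θ := le_max_right _ _
    have := hEnn t; have := hInn t
    simp only [hWdef]; nlinarith
  have hWdecay : ∀ t, μ * W t ≤ W (t + 1) := by
    intro t
    have h1 := hEstep t; have h2 := hIstep t
    have hμE : μ * E t ≤ dEE * E t :=
      mul_le_mul_of_nonneg_right (min_le_left _ _) (hEnn t)
    have hμI : μ * I t ≤ dII * I t :=
      mul_le_mul_of_nonneg_right (min_le_right _ _) (hInn t)
    have hE' : dEI * E t ≥ 0 := mul_nonneg hdEI (hEnn t)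
    have h3 : θ * (μ * I t) ≤ θ * I (t+1) := by
      apply mul_le_mul_of_nonneg_left _ hθ.le
      linarith
    simp only [hWdef]; nlinarith
  have hWdecay_iter : ∀ s k, μ ^ k * W s ≤ W (s + k) := by
    intro s k
    induction k with
    | zero => simp
    | succ k ih =>
      have := hWdecay (s + k)
      calc μ ^ (k+1) * W s = μ * (μ ^ k * W s) := by ring
        _ ≤ μ * W (s + k) := mul_le_mul_of_nonneg_left ih hμ0.le
        _ ≤ W (s + k + 1) := this
  have hWsmall : ∀ t, W t ≤ ηb → E t ≤ η ∧ I t ≤ η := by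
    intro t h
    have hEW : E t ≤ W t := by
      have := mul_nonneg hθ.le (hInn t); simp only [hWdef]; linarith
    have h2 : min 1 θ ≤ 1 := min_le_left _ _
    have h3 : min 1 θ ≤ θ := min_le_right _ _
    have hηb1 : ηb ≤ 1 * η := mul_le_mul_of_nonneg_right h2 hη.le
    have hηbθ : ηb ≤ θ * η := mul_le_mul_of_nonneg_right h3 hη.le
    constructor
    · linarith
    · have hIW : θ * I t ≤ W t := by
        have := hEnn t; simp only [hWdef]; linarith
      have : θ * I t ≤ θ * η := by linarith
      exact le_of_mul_le_mul_left (by linarith) hθ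
  -- geometric decay of R while I stays small
  have hRdecay : ∀ T k, (∀ i, i < k → I (T + i) ≤ η) →
      R (T + k) ≤ dRR ^ k * R T + dIR * η / (1 - dRR) := by
    intro T k
    induction k with
    | zero =>
      intro _
      have : 0 ≤ dIR * η / (1 - dRR) := div_nonneg (by positivity) (by linarith)
      simp; linarith
    | succ k ih =>
      intro hsm
      have ih' := ih (fun i hi => hsm i (Nat.lt_succ_of_lt hi))
      have h1 := hRstep (T + k)
      have hIk : I (T + k) ≤ η := hsm k (Nat.lt_succ_self k)
      have h2 : dIR * I (T + k) ≤ dIR * η := mul_le_mul_of_nonneg_left hIk hdIR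
      have h3 : dRR * R (T + k) ≤ dRR * (dRR ^ k * R T + dIR * η / (1 - dRR)) :=
        mul_le_mul_of_nonneg_left ih' hdRR0
      have h4 : dRR * (dIR * η / (1 - dRR)) + dIR * η ≤ dIR * η / (1 - dRR) := by
        have h5 : (1 - dRR) ≠ 0 := by linarith
        field_simp
        rw [div_le_div_iff₀ (by linarith) (by linarith)]
        ring_nf
        nlinarith [mul_nonneg hdIR hη.le]
      have : T + (k + 1) = (T + k) + 1 := by ring
      rw [this]
      calc R ((T + k) + 1) ≤ dIR * I (T + k) + dRR * R (T + k) := h1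
        _ ≤ dIR * η + dRR * (dRR ^ k * R T + dIR * η / (1 - dRR)) := by linarith
        _ ≤ dRR ^ (k+1) * R T + dIR * η / (1 - dRR) := by
            have : dRR * (dRR ^ k * R T) = dRR ^ (k+1) * R T := by ring
            nlinarith [this]
  -- T* : after this time, the absorbing bound is usable K+1 steps back
  set Ts : ℕ := T₀ + K + 1 with hTs
  -- Claim D : below ε' (after Ts), W grows by factor lam
  have claimD : ∀ t, Ts ≤ t → W t ≤ ε' → lam * W t ≤ W (t + 1) := by
    intro t ht hWt
    obtain ⟨T, hTeq⟩ : ∃ T, t = T + (K + 1) := by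
      refine ⟨t - (K + 1), ?_⟩
      omega
    have hTT₀ : T₀ ≤ T := by omega
    -- W is small on the window [T, T + (K+1)]
    have hwin : ∀ k, k ≤ K + 1 → W (T + k) ≤ ηb := by
      intro k hk
      have h1 : μ ^ (K + 1 - k) * W (T + k) ≤ W t := by
        have := hWdecay_iter (T + k) (K + 1 - k)
        have he : T + k + (K + 1 - k) = t := by omega
        rwa [he] at this
      have h2 : μ ^ (K + 1) ≤ μ ^ (K + 1 - k) :=
        pow_le_pow_of_le_one hμ0.le hμ1.le (by omega)
      have h3 : μ ^ (K + 1 - k) * W (T + k) ≤ ηb * μ ^ (K + 1) := le_trans h1 hWt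
      have h4 : ηb * μ ^ (K + 1) ≤ ηb * μ ^ (K + 1 - k) :=
        mul_le_mul_of_nonneg_left h2 hηb0.le
      have h5 : μ ^ (K + 1 - k) * W (T + k) ≤ μ ^ (K + 1 - k) * ηb := by
        calc μ ^ (K + 1 - k) * W (T + k) ≤ ηb * μ ^ (K + 1 - k) := le_trans h3 h4
          _ = μ ^ (K + 1 - k) * ηb := by ring
      exact le_of_mul_le_mul_left h5 (pow_pos hμ0 _)
    have hEI_small : ∀ k, k ≤ K + 1 → E (T + k) ≤ η ∧ I (T + k) ≤ η :=
      fun k hk => hWsmall _ (hwin k hk)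
    -- R is small at time t
    have hRt : R t ≤ η₂ := by
      have hR1 : R (T + (K + 1)) ≤ dRR ^ (K + 1) * R T + dIR * η / (1 - dRR) :=
        hRdecay T (K + 1) (fun i hi => (hEI_small i (by omega)).2)
      have hRT : R T ≤ Nstar := by
        have h := hT₀ T hTT₀
        have := hEI T; linarith
      have h2 : dRR ^ (K + 1) * R T ≤ dRR ^ K * Nstar := by
        have ha : dRR ^ (K + 1) ≤ dRR ^ K :=
          pow_le_pow_of_le_one hdRR0 hdRR1.le (by omega)
        have hb : dRR ^ (K + 1) * R T ≤ dRR ^ (K + 1) * Nstar :=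
          mul_le_mul_of_nonneg_left hRT (pow_nonneg hdRR0 _)
        have hc : dRR ^ (K + 1) * Nstar ≤ dRR ^ K * Nstar :=
          mul_le_mul_of_nonneg_right ha hNs.le
        linarith
      rw [hTeq]; linarith
    -- apply growth
    have ht1 : 1 ≤ t := by omega
    have hEt : E t ≤ η := by rw [hTeq]; exact (hEI_small (K + 1) le_rfl).1
    have hIt : I t ≤ η := by rw [hTeq]; exact (hEI_small (K + 1) le_rfl).2
    have hG := hGrow t ht1 hEt hIt hRt
    have hI2 := hIstep t
    have hθI : θ * (dEI * E t + dII * I t) ≤ θ * I (t + 1) :=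
      mul_le_mul_of_nonneg_left hI2 hθ.le
    have hcE : lam * E t ≤ (dEE + θ * dEI) * E t :=
      mul_le_mul_of_nonneg_right hcoef1 (hEnn t)
    have hcI : lam * θ * I t ≤ (bI' + θ * dII) * I t :=
      mul_le_mul_of_nonneg_right hcoef2 (hInn t)
    simp only [hWdef]; nlinarith
  -- Step A : W exceeds ηb at some time ≥ Ts
  have stepA : ∃ t₂, Ts ≤ t₂ ∧ ηb < W t₂ := by
    by_contra hcon
    push_neg at hcon
    have hsmall : ∀ t, Ts ≤ t → W t ≤ ηb := fun t ht => hcon t ht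
    have hEIsm : ∀ t, Ts ≤ t → E t ≤ η ∧ I t ≤ η := fun t ht => hWsmall t (hsmall t ht)
    -- R eventually small
    have hRsm : ∀ k, K ≤ k → R (Ts + k) ≤ η₂ := by
      intro k hk
      have h1 : R (Ts + k) ≤ dRR ^ k * R Ts + dIR * η / (1 - dRR) :=
        hRdecay Ts k (fun i _ => (hEIsm (Ts + i) (by omega)).2)
      have hRT : R Ts ≤ Nstar := by
        have h := hT₀ Ts (by omega)
        have := hEI Ts; linarith
      have h2 : dRR ^ k * R Ts ≤ dRR ^ K * Nstar := by
        have ha : dRR ^ k ≤ dRR ^ K := pow_le_pow_of_le_one hdRR0 hdRR1.le hk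
        have hb : dRR ^ k * R Ts ≤ dRR ^ k * Nstar :=
          mul_le_mul_of_nonneg_left hRT (pow_nonneg hdRR0 _)
        have hc : dRR ^ k * Nstar ≤ dRR ^ K * Nstar :=
          mul_le_mul_of_nonneg_right ha hNs.le
        linarith
      linarith
    -- geometric growth from T₂ := Ts + K
    set T₂ : ℕ := Ts + K with hT₂
    have hgrowiter : ∀ j, lam ^ j * W T₂ ≤ W (T₂ + j) := by
      intro j
      induction j with
      | zero => simp
      | succ j ih =>
        have ht' : Ts ≤ T₂ + j := by omega
        have hEIs := hEIsm (T₂ + j) ht'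
        have hRs : R (T₂ + j) ≤ η₂ := by
          have := hRsm (K + j) (by omega)
          have he : Ts + (K + j) = T₂ + j := by omega
          rwa [he] at this
        have hG := hGrow (T₂ + j) (by omega) hEIs.1 hEIs.2 hRs
        have hI2 := hIstep (T₂ + j)
        have hθI : θ * (dEI * E (T₂ + j) + dII * I (T₂ + j)) ≤ θ * I (T₂ + j + 1) :=
          mul_le_mul_of_nonneg_left hI2 hθ.le
        have hcE : lam * E (T₂ + j) ≤ (dEE + θ * dEI) * E (T₂ + j) :=
          mul_le_mul_of_nonneg_right hcoef1 (hEnn _)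
        have hcI : lam * θ * I (T₂ + j) ≤ (bI' + θ * dII) * I (T₂ + j) :=
          mul_le_mul_of_nonneg_right hcoef2 (hInn _)
        have hstep : lam * W (T₂ + j) ≤ W (T₂ + j + 1) := by
          simp only [hWdef]; nlinarith
        have hlamnn : (0:ℝ) ≤ lam ^ j := pow_nonneg (by linarith) _
        calc lam ^ (j + 1) * W T₂ = lam * (lam ^ j * W T₂) := by ring
          _ ≤ lam * W (T₂ + j) := mul_le_mul_of_nonneg_left ih (by linarith)
          _ ≤ W (T₂ + j + 1) := hstep
    obtain ⟨j, hj⟩ := pow_unbounded_of_one_lt (ηb / W T₂) hlam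
    have hWT₂ : 0 < W T₂ := hWpos T₂
    have h1 : ηb < lam ^ j * W T₂ := by
      rw [div_lt_iff₀ hWT₂] at hj; linarith
    have h2 := hgrowiter j
    have h3 := hsmall (T₂ + j) (by omega)
    linarith
  obtain ⟨t₂, ht₂, hWt₂⟩ := stepA
  -- forward invariance : W stays above μ * ε' from t₂ on
  have hforward : ∀ t, t₂ ≤ t → μ * ε' ≤ W t := by
    intro t ht
    induction t, ht using Nat.le_induction with
    | base =>
      have h1 : μ * ε' ≤ ε' := by nlinarith
      linarith
    | succ t ht ih =>
      rcases le_or_gt (W t) ε' with hc | hc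
      · have h1 := claimD t (by omega) hc
        have h2 := hWpos t
        nlinarith
      · have := hWdecay t
        nlinarith
  -- conclude about the liminf
  set εf : ℝ := μ * ε' / max 1 θ with hεf
  have hεf0 : 0 < εf := by positivity
  have hev : ∀ᶠ t in Filter.atTop, εf ≤ E t + I t := by
    rw [Filter.eventually_atTop]
    refine ⟨t₂, fun t ht => ?_⟩
    have h1 := hforward t ht
    have h2 := hWle t
    rw [hεf, div_le_iff₀ hmax0]
    nlinarith
  have hbd : ∀ᶠ t in Filter.atTop, E t + I t ≤ Nstar := by
    rw [Filter.eventually_atTop]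
    refine ⟨T₀, fun t ht => ?_⟩
    have := hT₀ t ht
    have := hRnn t
    linarith
  have hlim : εf ≤ Filter.liminf (fun t => E t + I t) Filter.atTop :=
    Filter.le_liminf_of_le (Filter.isCoboundedUnder_ge_of_eventually_le _ hbd) hev
  have hfin : min 1 θ * η * μ ^ (K + 1) * μ / (2 * max 1 θ) < εf := by
    rw [hεf, hε', hηb]
    rw [div_lt_div_iff₀ (by positivity) hmax0]
    have hx : 0 < min 1 θ * η * μ ^ (K + 1) * μ := by positivity
    nlinarith
  linarith

open Finset in
/-- Theorem 8(b): if `R̄₀ > 1`, the reduced system (21) is uniformly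
persistent in the infected compartments. -/
theorem reduced_system_uniform_persistence
    (n : ℕ) (hn : 0 < n)
    (B β σS σE σI σR γE γI γR : Fin n → ℝ)
    (hB : ∀ j, 0 < B j) (hβ : ∀ j, β j ∈ Set.Ioc (0:ℝ) 1)
    (hσS : ∀ j, σS j ∈ Set.Ioo (0:ℝ) 1) (hσE : ∀ j, σE j ∈ Set.Ioo (0:ℝ) 1)
    (hσI : ∀ j, σI j ∈ Set.Ioo (0:ℝ) 1) (hσR : ∀ j, σR j ∈ Set.Ioo (0:ℝ) 1)
    (hγE : ∀ j, γE j ∈ Set.Ioo (0:ℝ) 1) (hγI : ∀ j, γI j ∈ Set.Ioo (0:ℝ) 1)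
    (hγR : ∀ j, γR j ∈ Set.Ioo (0:ℝ) 1)
    (mS mE mI mR : Fin n → ℝ)
    (hmS : ∀ j, 0 < mS j) (hmE : ∀ j, 0 < mE j)
    (hmI : ∀ j, 0 < mI j) (hmR : ∀ j, 0 < mR j)
    (hmS1 : ∑ j, mS j = 1) (hmE1 : ∑ j, mE j = 1)
    (hmI1 : ∑ j, mI j = 1) (hmR1 : ∑ j, mR j = 1)
    -- the basic reproduction number R̄₀ = δ_E^I β̄_I / ((1-δ_E^E)(1-δ_I^I)) > 1 :
    (hR0 : 1 < (∑ j, σI j * γE j * mE j) * (∑ j, σE j * β j * mI j) /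
        ((1 - ∑ j, σE j * (1 - γE j) * mE j)
          * (1 - ∑ j, σI j * (1 - γI j) * mI j))) :
    ∃ ε > (0:ℝ), ∀ S E I R : ℕ → ℝ,
      0 ≤ S 0 → 0 ≤ E 0 → 0 ≤ I 0 → 0 ≤ R 0 →
      0 < S 0 + E 0 + I 0 + R 0 →
      0 < E 0 + I 0 →
      (∀ t, S (t+1) = (∑ j, B j) + (∑ j, σS j * γR j * mR j) * R t
          + (∑ j, σS j * mS j) * S t
          - (∑ j, σS j * β j * mI j * mS j /
              (mS j * S t + mE j * E t + mI j * I t + mR j * R t)) * S t * I t) →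
      (∀ t, E (t+1) = (∑ j, σE j * β j * mI j * mS j /
              (mS j * S t + mE j * E t + mI j * I t + mR j * R t)) * S t * I t
          + (∑ j, σE j * (1 - γE j) * mE j) * E t) →
      (∀ t, I (t+1) = (∑ j, σI j * γE j * mE j) * E t
          + (∑ j, σI j * (1 - γI j) * mI j) * I t) →
      (∀ t, R (t+1) = (∑ j, σR j * γI j * mI j) * I t
          + (∑ j, σR j * (1 - γR j) * mR j) * R t) →
      ε < Filter.liminf (fun t => E t + I t) Filter.atTop := by
  have hne : (Finset.univ : Finset (Fin n)).Nonempty := ⟨⟨0, hn⟩, Finset.mem_univ _⟩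
  -- total birth
  set Bb : ℝ := ∑ j, B j with hBbdef
  have hBb : 0 < Bb := Finset.sum_pos (fun j _ => hB j) hne
  -- uniform survival bound s < 1
  obtain ⟨s, hs1, hsS, hsE, hsI, hsR⟩ :
      ∃ s : ℝ, s < 1 ∧ (∀ j, σS j ≤ s) ∧ (∀ j, σE j ≤ s) ∧
        (∀ j, σI j ≤ s) ∧ (∀ j, σR j ≤ s) := by
    refine ⟨Finset.univ.sup' hne
      (fun j => max (max (σS j) (σE j)) (max (σI j) (σR j))), ?_,
      fun j => ?_, fun j => ?_, fun j => ?_, fun j => ?_⟩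
    · rw [Finset.sup'_lt_iff]
      intro j _
      exact max_lt (max_lt (hσS j).2 (hσE j).2) (max_lt (hσI j).2 (hσR j).2)
    · calc σS j ≤ max (max (σS j) (σE j)) (max (σI j) (σR j)) :=
          le_trans (le_max_left _ _) (le_max_left _ _)
        _ ≤ _ := Finset.le_sup' (fun j => max (max (σS j) (σE j)) (max (σI j) (σR j))) (Finset.mem_univ j)
    · calc σE j ≤ max (max (σS j) (σE j)) (max (σI j) (σR j)) :=
          le_trans (le_max_right _ _) (le_max_left _ _)
        _ ≤ _ := Finset.le_sup' (fun j => max (max (σS j) (σE j)) (max (σI j) (σR j))) (Finset.mem_univ j)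
    · calc σI j ≤ max (max (σS j) (σE j)) (max (σI j) (σR j)) :=
          le_trans (le_max_left _ _) (le_max_right _ _)
        _ ≤ _ := Finset.le_sup' (fun j => max (max (σS j) (σE j)) (max (σI j) (σR j))) (Finset.mem_univ j)
    · calc σR j ≤ max (max (σS j) (σE j)) (max (σI j) (σR j)) :=
          le_trans (le_max_right _ _) (le_max_right _ _)
        _ ≤ _ := Finset.le_sup' (fun j => max (max (σS j) (σE j)) (max (σI j) (σR j))) (Finset.mem_univ j)
  have hs0 : 0 < s := lt_of_lt_of_le (hσS ⟨0, hn⟩).1 (hsS ⟨0, hn⟩)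
  -- weight bounds
  obtain ⟨mlow, hmlow0, hmlowS⟩ : ∃ m : ℝ, 0 < m ∧ ∀ j, m ≤ mS j := by
    refine ⟨Finset.univ.inf' hne mS, ?_, fun j => Finset.inf'_le _ (Finset.mem_univ j)⟩
    rw [Finset.lt_inf'_iff]
    exact fun j _ => hmS j
  obtain ⟨mhigh, hmhE, hmhI, hmhR⟩ :
      ∃ m : ℝ, (∀ j, mE j ≤ m) ∧ (∀ j, mI j ≤ m) ∧ (∀ j, mR j ≤ m) := by
    refine ⟨Finset.univ.sup' hne (fun j => max (max (mE j) (mI j)) (mR j)),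
      fun j => ?_, fun j => ?_, fun j => ?_⟩
    · calc mE j ≤ max (max (mE j) (mI j)) (mR j) :=
          le_trans (le_max_left _ _) (le_max_left _ _)
        _ ≤ _ := Finset.le_sup' (fun j => max (max (mE j) (mI j)) (mR j)) (Finset.mem_univ j)
    · calc mI j ≤ max (max (mE j) (mI j)) (mR j) :=
          le_trans (le_max_right _ _) (le_max_left _ _)
        _ ≤ _ := Finset.le_sup' (fun j => max (max (mE j) (mI j)) (mR j)) (Finset.mem_univ j)
    · calc mR j ≤ max (max (mE j) (mI j)) (mR j) := le_max_right _ _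
        _ ≤ _ := Finset.le_sup' (fun j => max (max (mE j) (mI j)) (mR j)) (Finset.mem_univ j)
  have hmhigh0 : 0 < mhigh := lt_of_lt_of_le (hmE ⟨0, hn⟩) (hmhE ⟨0, hn⟩)
  -- the δ coefficients
  set dRS : ℝ := ∑ j, σS j * γR j * mR j with hdRS
  set dSS : ℝ := ∑ j, σS j * mS j with hdSS
  set dEE : ℝ := ∑ j, σE j * (1 - γE j) * mE j with hdEE
  set dEI : ℝ := ∑ j, σI j * γE j * mE j with hdEI
  set dII : ℝ := ∑ j, σI j * (1 - γI j) * mI j with hdII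
  set dIR : ℝ := ∑ j, σR j * γI j * mI j with hdIR
  set dRR : ℝ := ∑ j, σR j * (1 - γR j) * mR j with hdRR
  set bI : ℝ := ∑ j, σE j * β j * mI j with hbI
  have hdRS0 : 0 < dRS := Finset.sum_pos (fun j _ => by
    have := (hσS j).1; have := (hγR j).1; have := hmR j; positivity) hne
  have hdSS0 : 0 < dSS := Finset.sum_pos (fun j _ => by
    have := (hσS j).1; have := hmS j; positivity) hne
  have hdEE0 : 0 < dEE := Finset.sum_pos (fun j _ => by
    have := (hσE j).1; have h2 := (hγE j).2; have := hmE j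
    have : (0:ℝ) < 1 - γE j := by linarith
    positivity) hne
  have hdEI0 : 0 < dEI := Finset.sum_pos (fun j _ => by
    have := (hσI j).1; have := (hγE j).1; have := hmE j; positivity) hne
  have hdII0 : 0 < dII := Finset.sum_pos (fun j _ => by
    have := (hσI j).1; have h2 := (hγI j).2; have := hmI j
    have : (0:ℝ) < 1 - γI j := by linarith
    positivity) hne
  have hdIR0 : 0 < dIR := Finset.sum_pos (fun j _ => by
    have := (hσR j).1; have := (hγI j).1; have := hmI j; positivity) hne
  have hdRR0 : 0 < dRR := Finset.sum_pos (fun j _ => by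
    have := (hσR j).1; have h2 := (hγR j).2; have := hmR j
    have : (0:ℝ) < 1 - γR j := by linarith
    positivity) hne
  have hbI0 : 0 < bI := Finset.sum_pos (fun j _ => by
    have := (hσE j).1; have := (hβ j).1; have := hmI j; positivity) hne
  -- column bounds by s
  have hsum_le : ∀ (f : Fin n → ℝ) (m : Fin n → ℝ), (∑ j, m j = 1) →
      (∀ j, f j ≤ s * m j) → (∑ j, f j) ≤ s := by
    intro f m hm1 hf
    calc (∑ j, f j) ≤ ∑ j, s * m j := Finset.sum_le_sum (fun j _ => hf j)
      _ = s := by rw [← Finset.mul_sum, hm1, mul_one]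
  have hdEEs : dEE + dEI ≤ s := by
    rw [hdEE, hdEI, ← Finset.sum_add_distrib]
    apply hsum_le _ mE hmE1
    intro j
    exact aux_colsum (σE j) (σI j) s (γE j) (mE j) (hsE j) (hsI j)
      (hγE j).1.le (hγE j).2.le (hmE j).le
  have hdIIs : dII + dIR ≤ s := by
    rw [hdII, hdIR, ← Finset.sum_add_distrib]
    apply hsum_le _ mI hmI1
    intro j
    exact aux_colsum (σI j) (σR j) s (γI j) (mI j) (hsI j) (hsR j)
      (hγI j).1.le (hγI j).2.le (hmI j).le
  have hdRRs : dRS + dRR ≤ s := by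
    rw [hdRS, hdRR, ← Finset.sum_add_distrib]
    apply hsum_le _ mR hmR1
    intro j
    have := aux_colsum (σR j) (σS j) s (γR j) (mR j) (hsR j) (hsS j)
      (hγR j).1.le (hγR j).2.le (hmR j).le
    linarith
  have hdEE1 : dEE < 1 := by linarith
  have hdII1 : dII < 1 := by linarith
  have hdRR1 : dRR < 1 := by linarith
  -- spectral gap
  set A : ℝ := dEI * bI with hA
  set C : ℝ := (1 - dEE) * (1 - dII) with hC
  have hC0 : 0 < C := mul_pos (by linarith) (by linarith)
  have hCA : C < A := (one_lt_div hC0).mp hR0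
  set ρ : ℝ := min 1 ((A - C) / 8) with hρ
  have hρ0 : 0 < ρ := lt_min one_pos (by linarith)
  have hρ1 : ρ ≤ 1 := min_le_left _ _
  have hρ8 : ρ ≤ (A - C) / 8 := min_le_right _ _
  set θ : ℝ := (1 - dEE + ρ) / dEI with hθ
  have hθ0 : 0 < θ := div_pos (by linarith) hdEI0
  set lam : ℝ := 1 + ρ with hlam
  have hlam1 : 1 < lam := by rw [hlam]; linarith
  have hCpoly : (1 - dEE + ρ) * (1 - dII + ρ) ≤ C + 3 * ρ := by
    rw [hC]
    exact aux_poly dEE dII ρ hdEE0.le hdII0.le hρ0.le hρ1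
  have hA3 : C + 3 * ρ < A := by
    have : 3 * ρ ≤ 3 * ((A - C) / 8) := by linarith
    linarith
  -- the smallness thresholds
  set hh : ℝ := min 1 (mlow * Bb * (A - (C + 3 * ρ)) / ((C + 3 * ρ) * mhigh)) with hhh
  have hhh0 : 0 < hh := by
    apply lt_min one_pos
    have h1 : 0 < C + 3 * ρ := by linarith
    have h2 : 0 < A - (C + 3 * ρ) := by linarith
    positivity
  set η₂ : ℝ := hh / 3 with hη₂def
  have hη₂0 : 0 < η₂ := by positivity
  set η : ℝ := min (hh / 3) (η₂ * (1 - dRR) / (2 * dIR)) with hηdef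
  have hη0 : 0 < η := by
    apply lt_min (by positivity)
    have : 0 < 1 - dRR := by linarith
    positivity
  have hηh : η ≤ hh / 3 := min_le_left _ _
  set κ : ℝ := mlow * Bb / (mlow * Bb + mhigh * hh) with hκ
  set bI' : ℝ := κ * bI with hbI'
  have hκA : C + 3 * ρ ≤ κ * A := by
    have hX : 0 < mlow * Bb + mhigh * hh := by positivity
    rw [hκ, div_mul_eq_mul_div, le_div_iff₀ hX]
    have h1 : hh ≤ mlow * Bb * (A - (C + 3 * ρ)) / ((C + 3 * ρ) * mhigh) :=
      min_le_right _ _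
    have hC3 : 0 < C + 3 * ρ := by linarith
    have h2 : 0 < (C + 3 * ρ) * mhigh := by positivity
    rw [le_div_iff₀ h2] at h1
    have := aux_kA (mlow * Bb) mhigh hh A (C + 3 * ρ) h1
    linarith
  have e1 : θ * dEI = 1 - dEE + ρ := by
    rw [hθ, div_mul_cancel₀ _ (ne_of_gt hdEI0)]
  have hcoef1 : lam ≤ dEE + θ * dEI := by rw [hlam]; linarith
  have hcoef2 : lam * θ ≤ bI' + θ * dII := by
    have hpoly2 : (1 - dEE + ρ) * (1 - dII + ρ) ≤ κ * A := le_trans hCpoly hκA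
    have e4 : bI' * dEI = κ * A := by rw [hbI', hA]; ring
    have key : lam * θ * dEI ≤ (bI' + θ * dII) * dEI := by
      rw [hlam]
      have expand : (bI' + θ * dII) * dEI = bI' * dEI + θ * dII * dEI := by ring
      rw [expand, e4]
      exact aux_coef2 θ dEI dEE dII ρ (κ * A) e1 hpoly2
    exact le_of_mul_le_mul_right key hdEI0
  -- absorbing bound and decay horizon
  set Nstar : ℝ := Bb / (1 - s) + 1 with hNstar
  have hNs0 : 0 < Nstar := by
    have : 0 < 1 - s := by linarith
    positivity
  obtain ⟨K, hKlt⟩ := exists_pow_lt_of_lt_one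
    (show (0:ℝ) < η₂ / (2 * Nstar) by positivity) hdRR1
  have hK : dRR ^ K * Nstar ≤ η₂ / 2 := by
    have h1 : dRR ^ K * Nstar ≤ η₂ / (2 * Nstar) * Nstar :=
      mul_le_mul_of_nonneg_right hKlt.le hNs0.le
    have h2 : η₂ / (2 * Nstar) * Nstar = η₂ / 2 := by field_simp
    linarith [h1, h2.le]
  have hcc : dIR * η / (1 - dRR) ≤ η₂ / 2 := by
    have h1 : 0 < 1 - dRR := by linarith
    rw [div_le_iff₀ h1]
    have h2 : η ≤ η₂ * (1 - dRR) / (2 * dIR) := min_le_right _ _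
    have h3 : dIR * η ≤ dIR * (η₂ * (1 - dRR) / (2 * dIR)) :=
      mul_le_mul_of_nonneg_left h2 hdIR0.le
    have h4 : dIR * (η₂ * (1 - dRR) / (2 * dIR)) = η₂ / 2 * (1 - dRR) := by
      field_simp
    linarith [h3, h4.le]
  clear_value Bb dRS dSS dEE dEI dII dIR dRR bI A C ρ θ lam hh η₂ η κ bI' Nstar
  -- choose ε and fix a solution
  refine ⟨min 1 θ * η * min dEE dII ^ (K + 1) * min dEE dII / (2 * max 1 θ), ?_, ?_⟩
  · have h1 : 0 < min 1 θ := lt_min one_pos hθ0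
    have h2 : 0 < min dEE dII := lt_min hdEE0 hdII0
    have h3 : (0:ℝ) < max 1 θ := lt_of_lt_of_le one_pos (le_max_left _ _)
    positivity
  intro S E I R hS0 hE0 hI0 hRin0 hNpos0 hEIpos0 hSeq hEeq hIeq hReq
  -- positivity invariants
  have key : ∀ t, (0 ≤ S t ∧ 0 ≤ E t ∧ 0 ≤ I t ∧ 0 ≤ R t)
      ∧ 0 < S t + E t + I t + R t := by
    intro t
    induction t with
    | zero => exact ⟨⟨hS0, hE0, hI0, hRin0⟩, hNpos0⟩
    | succ t ih =>
      obtain ⟨⟨hSt, hEt, hIt, hRt⟩, hNt⟩ := ih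
      have hden : ∀ j, 0 < mS j * S t + mE j * E t + mI j * I t + mR j * R t :=
        fun j => aux_den_pos _ _ _ _ _ _ _ _ (hmS j) (hmE j) (hmI j) (hmR j)
          hSt hEt hIt hRt hNt
      have hinfS : (∑ j, σS j * β j * mI j * mS j /
            (mS j * S t + mE j * E t + mI j * I t + mR j * R t)) * S t * I t
          ≤ dSS * S t := by
        rw [hdSS, Finset.sum_mul, Finset.sum_mul, Finset.sum_mul]
        apply Finset.sum_le_sum
        intro j _
        exact aux_infection_le (σS j) (β j) (mI j) (mS j) _ (S t) (I t)
          (hσS j).1.le (hβ j).1.le (hβ j).2 (hmI j).le (hmS j).le (hden j) hSt hIt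
          (by linarith [mul_nonneg (hmS j).le hSt, mul_nonneg (hmE j).le hEt,
            mul_nonneg (hmR j).le hRt])
      have hEinf : 0 ≤ (∑ j, σE j * β j * mI j * mS j /
            (mS j * S t + mE j * E t + mI j * I t + mR j * R t)) * S t * I t := by
        apply mul_nonneg (mul_nonneg _ hSt) hIt
        apply Finset.sum_nonneg
        intro j _
        have h1 := (hσE j).1; have h2 := (hβ j).1; have h3 := hmI j
        have h4 := hmS j; have h5 := hden j
        positivity
      have hdRSR : 0 ≤ dRS * R t := mul_nonneg hdRS0.le hRt
      have hSnext : Bb ≤ S (t + 1) := by rw [hSeq t]; linarith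
      have hEnext : 0 ≤ E (t + 1) := by
        rw [hEeq t]
        have := mul_nonneg hdEE0.le hEt
        linarith
      have hInext : 0 ≤ I (t + 1) := by
        rw [hIeq t]
        have := mul_nonneg hdEI0.le hEt
        have := mul_nonneg hdII0.le hIt
        linarith
      have hRnext : 0 ≤ R (t + 1) := by
        rw [hReq t]
        have := mul_nonneg hdIR0.le hIt
        have := mul_nonneg hdRR0.le hRt
        linarith
      exact ⟨⟨by linarith, hEnext, hInext, hRnext⟩, by linarith⟩
  have hSnn : ∀ t, 0 ≤ S t := fun t => (key t).1.1
  have hEnn : ∀ t, 0 ≤ E t := fun t => (key t).1.2.1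
  have hInn : ∀ t, 0 ≤ I t := fun t => (key t).1.2.2.1
  have hRnn : ∀ t, 0 ≤ R t := fun t => (key t).1.2.2.2
  have hNpos : ∀ t, 0 < S t + E t + I t + R t := fun t => (key t).2
  have hden : ∀ t j, 0 < mS j * S t + mE j * E t + mI j * I t + mR j * R t :=
    fun t j => aux_den_pos _ _ _ _ _ _ _ _ (hmS j) (hmE j) (hmI j) (hmR j)
      (hSnn t) (hEnn t) (hInn t) (hRnn t) (hNpos t)
  have hinfS : ∀ t, (∑ j, σS j * β j * mI j * mS j /
        (mS j * S t + mE j * E t + mI j * I t + mR j * R t)) * S t * I t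
      ≤ dSS * S t := by
    intro t
    rw [hdSS, Finset.sum_mul, Finset.sum_mul, Finset.sum_mul]
    apply Finset.sum_le_sum
    intro j _
    exact aux_infection_le (σS j) (β j) (mI j) (mS j) _ (S t) (I t)
      (hσS j).1.le (hβ j).1.le (hβ j).2 (hmI j).le (hmS j).le (hden t j)
      (hSnn t) (hInn t)
      (by linarith [mul_nonneg (hmS j).le (hSnn t), mul_nonneg (hmE j).le (hEnn t),
        mul_nonneg (hmR j).le (hRnn t)])
  have hEinf : ∀ t, 0 ≤ (∑ j, σE j * β j * mI j * mS j /
        (mS j * S t + mE j * E t + mI j * I t + mR j * R t)) * S t * I t := by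
    intro t
    apply mul_nonneg (mul_nonneg _ (hSnn t)) (hInn t)
    apply Finset.sum_nonneg
    intro j _
    have h1 := (hσE j).1; have h2 := (hβ j).1; have h3 := hmI j
    have h4 := hmS j; have h5 := hden t j
    positivity
  have hSfloor : ∀ t, Bb ≤ S (t + 1) := by
    intro t
    rw [hSeq t]
    linarith [hinfS t, mul_nonneg hdRS0.le (hRnn t)]
  -- one-step total-population bound
  have hNstep : ∀ t, S (t+1) + E (t+1) + I (t+1) + R (t+1)
      ≤ Bb + s * (S t + E t + I t + R t) := by
    intro t
    have hcolS : (∑ j, σE j * β j * mI j * mS j /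
          (mS j * S t + mE j * E t + mI j * I t + mR j * R t)) * S t * I t
        - (∑ j, σS j * β j * mI j * mS j /
          (mS j * S t + mE j * E t + mI j * I t + mR j * R t)) * S t * I t
        + dSS * S t ≤ s * S t := by
      have e4 : (∑ j, s * mS j * S t) = s * S t := by
        rw [← Finset.sum_mul, ← Finset.mul_sum, hmS1, mul_one]
      rw [hdSS, Finset.sum_mul, Finset.sum_mul, Finset.sum_mul, Finset.sum_mul,
        Finset.sum_mul, ← e4, ← Finset.sum_sub_distrib, ← Finset.sum_add_distrib]
      apply Finset.sum_le_sum
      intro j _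
      exact aux_col_S (σS j) (σE j) s (β j) (mI j) (mS j) _ (S t) (I t)
        (hσS j).1.le (hsS j) (hσE j).1.le (hsE j) (hβ j).1.le (hβ j).2
        (hmI j).le (hmS j).le (hden t j) (hSnn t) (hInn t)
        (by linarith [mul_nonneg (hmS j).le (hSnn t), mul_nonneg (hmE j).le (hEnn t),
          mul_nonneg (hmR j).le (hRnn t)])
    have hcolE : dEE * E t + dEI * E t ≤ s * E t := by
      have e := mul_le_mul_of_nonneg_right hdEEs (hEnn t)
      rw [add_mul] at e
      linarith
    have hcolI : dII * I t + dIR * I t ≤ s * I t := by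
      have e := mul_le_mul_of_nonneg_right hdIIs (hInn t)
      rw [add_mul] at e
      linarith
    have hcolR : dRS * R t + dRR * R t ≤ s * R t := by
      have e := mul_le_mul_of_nonneg_right hdRRs (hRnn t)
      rw [add_mul] at e
      linarith
    have hdist : s * (S t + E t + I t + R t) = s * S t + s * E t + s * I t + s * R t := by
      ring
    rw [hSeq t, hEeq t, hIeq t, hReq t]
    linarith
  -- eventual absorbing bound
  have hNgeom : ∀ t, S t + E t + I t + R t
      ≤ s ^ t * (S 0 + E 0 + I 0 + R 0) + Bb / (1 - s) := by
    intro t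
    induction t with
    | zero =>
      have h0 : 0 < 1 - s := by linarith
      have : 0 ≤ Bb / (1 - s) := by positivity
      simp only [pow_zero, one_mul]
      linarith
    | succ t ih =>
      have h1 := hNstep t
      have h2 : s * (S t + E t + I t + R t)
          ≤ s * (s ^ t * (S 0 + E 0 + I 0 + R 0) + Bb / (1 - s)) :=
        mul_le_mul_of_nonneg_left ih hs0.le
      have h4 : (1 - s) ≠ 0 := by linarith
      have h3 : Bb + s * (s ^ t * (S 0 + E 0 + I 0 + R 0) + Bb / (1 - s))
          = s ^ (t+1) * (S 0 + E 0 + I 0 + R 0) + Bb / (1 - s) := by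
        field_simp
        ring
      linarith
  have hbound : ∃ T₀, ∀ t, T₀ ≤ t → E t + I t + R t ≤ Nstar := by
    obtain ⟨T₀, hT₀lt⟩ := exists_pow_lt_of_lt_one
      (show (0:ℝ) < 1 / (S 0 + E 0 + I 0 + R 0) by positivity) hs1
    refine ⟨T₀, fun t ht => ?_⟩
    have h1 : s ^ t ≤ s ^ T₀ := pow_le_pow_of_le_one hs0.le hs1.le ht
    have h2 : s ^ t * (S 0 + E 0 + I 0 + R 0) ≤ s ^ T₀ * (S 0 + E 0 + I 0 + R 0) :=
      mul_le_mul_of_nonneg_right h1 hNpos0.le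
    have h3 : s ^ T₀ * (S 0 + E 0 + I 0 + R 0) ≤ 1 := by
      have h5 := mul_le_mul_of_nonneg_right hT₀lt.le hNpos0.le
      have e : 1 / (S 0 + E 0 + I 0 + R 0) * (S 0 + E 0 + I 0 + R 0) = 1 := by
        field_simp
      linarith
    have h6 := hNgeom t
    have h7 := hSnn t
    have e2 : Nstar = Bb / (1 - s) + 1 := hNstar
    linarith
  -- infected compartments never die out
  have hEIpos : ∀ t, 0 < E t + I t := by
    intro t
    induction t with
    | zero => exact hEIpos0
    | succ t ih =>
      have hEt := hEnn t; have hIt := hInn t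
      rcases lt_or_ge 0 (E t) with hE | hE
      · have h1 : dEE * E t ≤ E (t+1) := by
          rw [hEeq t]; linarith [hEinf t]
        have h2 := mul_pos hdEE0 hE
        linarith [hInn (t+1)]
      · have hI : 0 < I t := by linarith
        have h1 : I (t+1) = dEI * E t + dII * I t := hIeq t
        have h2 := mul_pos hdII0 hI
        have h3 := mul_nonneg hdEI0.le hEt
        linarith [hEnn (t+1)]
  -- the four step hypotheses of the abstract lemma
  have hEstep : ∀ t, dEE * E t ≤ E (t+1) := by
    intro t
    rw [hEeq t]
    linarith [hEinf t]
  have hIstep : ∀ t, dEI * E t + dII * I t ≤ I (t+1) := fun t => le_of_eq (hIeq t).symm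
  have hRstep : ∀ t, R (t+1) ≤ dIR * I t + dRR * R t := fun t => le_of_eq (hReq t)
  have hGrow : ∀ t, 1 ≤ t → E t ≤ η → I t ≤ η → R t ≤ η₂ →
      bI' * I t + dEE * E t ≤ E (t+1) := by
    intro t ht hEs hIs hRs
    obtain ⟨t', rfl⟩ : ∃ t', t = t' + 1 := ⟨t - 1, by omega⟩
    rw [hEeq (t' + 1)]
    have hmain : bI' * I (t' + 1) ≤ (∑ j, σE j * β j * mI j * mS j /
        (mS j * S (t'+1) + mE j * E (t'+1) + mI j * I (t'+1) + mR j * R (t'+1)))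
        * S (t'+1) * I (t'+1) := by
      have e1 : bI' * I (t' + 1) = ∑ j, mlow * Bb / (mlow * Bb + mhigh * hh)
          * (σE j * β j * mI j) * I (t' + 1) := by
        rw [hbI', hκ, hbI, Finset.mul_sum, Finset.sum_mul]
      rw [e1, Finset.sum_mul, Finset.sum_mul]
      apply Finset.sum_le_sum
      intro j _
      have hR3 : R (t' + 1) ≤ hh / 3 := by rw [hη₂def] at hRs; exact hRs
      have p1 : mE j * E (t' + 1) ≤ mhigh * (hh / 3) :=
        mul_le_mul (hmhE j) (le_trans hEs hηh) (hEnn _) (by linarith)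
      have p2 : mI j * I (t' + 1) ≤ mhigh * (hh / 3) :=
        mul_le_mul (hmhI j) (le_trans hIs hηh) (hInn _) (by linarith)
      have p3 : mR j * R (t' + 1) ≤ mhigh * (hh / 3) :=
        mul_le_mul (hmhR j) hR3 (hRnn _) (by linarith)
      have hsm : mE j * E (t'+1) + mI j * I (t'+1) + mR j * R (t'+1)
          ≤ mhigh * hh := by linarith
      have hag := aux_growth (σE j) (β j) (mI j) (mS j) (mE j) (mR j)
        mlow mhigh Bb hh (S (t'+1)) (E (t'+1)) (I (t'+1)) (R (t'+1))
        (hσE j).1.le (hβ j).1.le (hmI j).le hmlow0 hmhigh0 hBb hhh0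
        (hmlowS j) (hmhE j) (hmhI j) (hmhR j) (hSfloor t') (hEnn _) (hInn _)
        (hRnn _) (hden (t'+1) j) hsm
      exact mul_le_mul_of_nonneg_right hag (hInn _)
    linarith [hmain]
  exact persistence_aux dEE dII dEI dIR dRR bI' θ lam η η₂ Nstar K
    hdEE0 hdEE1 hdII0 hdII1 hdEI0.le hdIR0.le hdRR0.le hdRR1 hθ0 hlam1
    hη0 hη₂0 hNs0 hcoef1 hcoef2 hK hcc E I R hEnn hInn hRnn hEIpos hbound
    hEstep hIstep hRstep hGrow
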